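/- Let n, D be positive integers, let Â be an n×n real matrix, and let X be an n×D real matrix. Let g : (Fin D → ℝ) → (Fin D → ℝ) be differentiable at the point (Â * X) i (the i-th row of Â * X) for every i : Fin n. Define F : Matrix (Fin n) (Fin D) ℝ → Matrix (Fin n) (Fin D) ℝ by (F X') i = g ((Â * X') i), i.e., g is applied to each row of Â * X' independently and identically. Then F is differentiable at X, and the absolute value of the determinant of its Fréchet derivative at X satisfies |det (fderiv ℝ F X)| = |det Â|^D · ∏_{i : Fin n} |det (fderiv ℝ g ((Â * X) i))|, where the determinant of a continuous linear endomorphism means LinearMap.det of its underlying linear map. -/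

import Mathlib

attribute [local instance] Matrix.normedAddCommGroup Matrix.normedSpace

lemma det_pi_aux {ι κ : Type*} [Fintype ι] [DecidableEq ι] [Fintype κ] [DecidableEq κ]
    (f : ι → ((κ → ℝ) →ₗ[ℝ] (κ → ℝ))) :
    LinearMap.det (LinearMap.pi fun i => (f i).comp (LinearMap.proj i)) =
      ∏ i, LinearMap.det (f i) := by
  classical
  let e : (ι → κ → ℝ) ≃ₗ[ℝ] (κ × ι → ℝ) :=
    { toFun := fun x p => x p.2 p.1
      invFun := fun y i j => y (j, i)
      map_add' := fun _ _ => rfl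
      map_smul' := fun _ _ => rfl
      left_inv := fun _ => rfl
      right_inv := fun _ => rfl }
  let b : Module.Basis (κ × ι) ℝ (ι → κ → ℝ) := Module.Basis.ofEquivFun e
  rw [← LinearMap.det_toMatrix b]
  have hM : LinearMap.toMatrix b b (LinearMap.pi fun i => (f i).comp (LinearMap.proj i)) =
      Matrix.blockDiagonal (fun i => LinearMap.toMatrix' (f i)) := by
    ext ⟨j, i⟩ ⟨j', i'⟩
    rw [LinearMap.toMatrix_apply, Module.Basis.ofEquivFun_repr_apply]
    have hb : b (j', i') = fun a c => if a = i' then (if c = j' then (1:ℝ) else 0) else 0 := by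
      ext a c
      simp only [b, Module.Basis.coe_ofEquivFun, e]
      show Function.update (0 : κ × ι → ℝ) (j', i') 1 (c, a) = _
      rw [Function.update_apply]
      simp [Prod.ext_iff, and_comm, ite_and]
    rw [hb]
    show (f i) (fun c => if i = i' then (if c = j' then (1:ℝ) else 0) else 0) j = _
    by_cases h : i = i'
    · subst h
      simp only [if_true, Matrix.blockDiagonal_apply_eq]
      rw [LinearMap.toMatrix'_apply]
      rw [show (Pi.single j' (1:ℝ) : κ → ℝ) = fun c => if c = j' then 1 else 0 from
        funext fun c => Pi.single_apply j' 1 c]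
    · simp only [h, if_false]
      rw [Matrix.blockDiagonal_apply_ne _ _ _ h]
      have : (fun _ : κ => (0:ℝ)) = 0 := rfl
      rw [this, map_zero]
      rfl
  rw [hM, Matrix.det_blockDiagonal]
  simp [LinearMap.det_toMatrix']

noncomputable def mulLeftLM (n D : ℕ) (A : Matrix (Fin n) (Fin n) ℝ) :
    Matrix (Fin n) (Fin D) ℝ →ₗ[ℝ] Matrix (Fin n) (Fin D) ℝ where
  toFun X := A * X
  map_add' B C := Matrix.mul_add A B C
  map_smul' r B := Matrix.mul_smul A r B

lemma det_mulLeftLM (n D : ℕ) (A : Matrix (Fin n) (Fin n) ℝ) :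
    LinearMap.det (mulLeftLM n D A) = A.det ^ D := by
  classical
  let e : Matrix (Fin n) (Fin D) ℝ ≃ₗ[ℝ] (Fin n × Fin D → ℝ) :=
    { toFun := fun x p => x p.1 p.2
      invFun := fun y i j => y (i, j)
      map_add' := fun _ _ => rfl
      map_smul' := fun _ _ => rfl
      left_inv := fun _ => rfl
      right_inv := fun _ => rfl }
  let b : Module.Basis (Fin n × Fin D) ℝ (Matrix (Fin n) (Fin D) ℝ) := Module.Basis.ofEquivFun e
  rw [← LinearMap.det_toMatrix b]
  have hM : LinearMap.toMatrix b b (mulLeftLM n D A) =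
      Matrix.blockDiagonal (fun _ : Fin D => A) := by
    ext ⟨i, j⟩ ⟨i', j'⟩
    rw [LinearMap.toMatrix_apply, Module.Basis.ofEquivFun_repr_apply]
    have hb : b (i', j') = Matrix.of fun a c => if a = i' then (if c = j' then (1:ℝ) else 0) else 0 := by
      ext a c
      simp only [b, Module.Basis.coe_ofEquivFun, e]
      show Function.update (0 : Fin n × Fin D → ℝ) (i', j') 1 (a, c) = _
      rw [Function.update_apply]
      simp [Prod.ext_iff, ite_and]
    rw [hb]
    show (A * Matrix.of (fun a c => if a = i' then (if c = j' then (1:ℝ) else 0) else 0)) i j = _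
    simp [Matrix.mul_apply, Matrix.blockDiagonal_apply, mul_ite, Finset.sum_ite_eq]
  rw [hM, Matrix.det_blockDiagonal]
  simp

/-- **Determinant Lemma** (Lemma 4.1 of the GC-Flow paper): if `F` applies a map `g`
(differentiable at the relevant points) to each row of `Ahat * X'` independently and
identically, then `F` is differentiable at `X` and
`|det (fderiv ℝ F X)| = |det Ahat|^D * ∏ i, |det (fderiv ℝ g ((Ahat * X) i))|`. -/
theorem gcflow_determinant_lemma (n D : ℕ) (hn : 0 < n) (hD : 0 < D)
    (Ahat : Matrix (Fin n) (Fin n) ℝ) (X : Matrix (Fin n) (Fin D) ℝ)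
    (g : (Fin D → ℝ) → (Fin D → ℝ))
    (hg : ∀ i : Fin n, DifferentiableAt ℝ g ((Ahat * X) i))
    (F : Matrix (Fin n) (Fin D) ℝ → Matrix (Fin n) (Fin D) ℝ)
    (hF : ∀ (X' : Matrix (Fin n) (Fin D) ℝ) (i : Fin n), F X' i = g ((Ahat * X') i)) :
    DifferentiableAt ℝ F X ∧
      |LinearMap.det (fderiv ℝ F X).toLinearMap| =
        |Ahat.det| ^ D * ∏ i : Fin n, |LinearMap.det (fderiv ℝ g ((Ahat * X) i)).toLinearMap| := by
  classical
  set Y : Matrix (Fin n) (Fin D) ℝ := Ahat * X with hY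
  let L : Matrix (Fin n) (Fin D) ℝ →L[ℝ] Matrix (Fin n) (Fin D) ℝ :=
    (mulLeftLM n D Ahat).toContinuousLinearMap
  let φ : Fin n → ((Fin D → ℝ) →L[ℝ] (Fin D → ℝ)) := fun i => fderiv ℝ g (Y i)
  let T : Matrix (Fin n) (Fin D) ℝ →L[ℝ] Matrix (Fin n) (Fin D) ℝ :=
    ContinuousLinearMap.pi (fun i => (φ i).comp (ContinuousLinearMap.proj i))
  have hgi : ∀ i : Fin n, HasFDerivAt (fun Y' : Matrix (Fin n) (Fin D) ℝ => g (Y' i))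
      ((φ i).comp (ContinuousLinearMap.proj i)) Y := by
    intro i
    have hproj : HasFDerivAt (𝕜 := ℝ) (fun Y' : Matrix (Fin n) (Fin D) ℝ => Y' i)
        (ContinuousLinearMap.proj i) Y := by
      exact (ContinuousLinearMap.proj (R := ℝ) (φ := fun _ : Fin n => Fin D → ℝ) i).hasFDerivAt
    exact ((hg i).hasFDerivAt).comp Y hproj
  have hG : HasFDerivAt (fun (Y' : Matrix (Fin n) (Fin D) ℝ) (i : Fin n) => g (Y' i)) T Y :=
    hasFDerivAt_pi.mpr hgi
  have hFeq : F = (fun (Y' : Matrix (Fin n) (Fin D) ℝ) (i : Fin n) => g (Y' i)) ∘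
      (fun X' => Ahat * X') := by
    funext X' i
    exact hF X' i
  have hL : HasFDerivAt (fun X' : Matrix (Fin n) (Fin D) ℝ => Ahat * X') L X := L.hasFDerivAt
  have hF' : HasFDerivAt F (T.comp L) X := by
    rw [hFeq]
    exact hG.comp X hL
  refine ⟨hF'.differentiableAt, ?_⟩
  rw [hF'.fderiv, ContinuousLinearMap.toLinearMap_comp, LinearMap.det_comp, abs_mul]
  have hTdet : LinearMap.det (T : Matrix (Fin n) (Fin D) ℝ →ₗ[ℝ] Matrix (Fin n) (Fin D) ℝ) =
      ∏ i : Fin n, LinearMap.det ((φ i) : (Fin D → ℝ) →ₗ[ℝ] (Fin D → ℝ)) := by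
    have := det_pi_aux (fun i : Fin n => ((φ i) : (Fin D → ℝ) →ₗ[ℝ] (Fin D → ℝ)))
    exact this
  have hLdet : LinearMap.det (L : Matrix (Fin n) (Fin D) ℝ →ₗ[ℝ] Matrix (Fin n) (Fin D) ℝ) =
      Ahat.det ^ D := by
    rw [show (L : Matrix (Fin n) (Fin D) ℝ →ₗ[ℝ] Matrix (Fin n) (Fin D) ℝ) = mulLeftLM n D Ahat
      from LinearMap.coe_toContinuousLinearMap _]
    exact det_mulLeftLM n D Ahat
  rw [hTdet, hLdet, abs_pow, Finset.abs_prod, mul_comm]
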